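/- Let F : [t0, T] × ℝ^{n1×n2} → ℝ^{n1×n2} be continuous, satisfy ‖F(t,Y) − F(t,Ỹ)‖ ≤ L‖Y − Ỹ‖ and ‖F(t,Y)‖ ≤ B for all Y, Ỹ ∈ ℝ^{n1×n2} and t ∈ [t0,T] (Frobenius norm), and let A(t) solve Ȧ(t) = F(t, A(t)) with A(t0) of rank r. Suppose there is ε ≥ 0 such that for every t ∈ [t0,T] and every rank-r matrix Y = USVᵀ (U ∈ ℝ^{n1×r}, V ∈ ℝ^{n2×r} orthonormal columns, S ∈ ℝ^{r×r} invertible) in a neighborhood of A(t), the non-tangential part of F is small: ‖(I − UUᵀ) F(t,Y) (I − VVᵀ)‖ ≤ ε (equivalently, F(t,Y) = M(t,Y) + R(t,Y) with M(t,Y) ∈ T_Y M and ‖R(t,Y)‖ ≤ ε). Let Y_n be the iterates of the matrix projector-splitting integrator with step size h > 0, starting from Y_0 = A(t0), where in each step the three substep differential equations are solved exactly. Then there exist constants c1, c2 depending only on L, B and T − t0 (in particular, independent of n1, n2, r, h, ε, and of all singular values of the exact or approximate solutions) such that ‖Y_n − A(t_n)‖ ≤ c1 h + c2 ε for all n with t_n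 = t0 + nh ≤ T. -/

import Mathlib

open Matrix Set

namespace MatrixPS

/-- Frobenius norm of a real matrix. -/
noncomputable def mfrob {α β : Type*} [Fintype α] [Fintype β] (A : Matrix α β ℝ) : ℝ :=
  Real.sqrt (∑ a, ∑ b, A a b ^ 2)

variable {n m p q : ℕ}

noncomputable def toE (A : Matrix (Fin n) (Fin m) ℝ) : EuclideanSpace ℝ (Fin n × Fin m) :=
  (PiLp.continuousLinearEquiv 2 ℝ (fun _ : Fin n × Fin m => ℝ)).symm (fun x => A x.1 x.2)

lemma mfrob_eq_norm (A : Matrix (Fin n) (Fin m) ℝ) : mfrob A = ‖toE A‖ := by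
  rw [EuclideanSpace.norm_eq, mfrob]
  congr 1
  rw [Fintype.sum_prod_type]
  refine Finset.sum_congr rfl fun a _ => Finset.sum_congr rfl fun b _ => ?_
  simp [toE, sq_abs]

lemma toE_sub (A B : Matrix (Fin n) (Fin m) ℝ) : toE (A - B) = toE A - toE B := rfl
lemma toE_add (A B : Matrix (Fin n) (Fin m) ℝ) : toE (A + B) = toE A + toE B := rfl

lemma mfrob_nonneg (A : Matrix (Fin n) (Fin m) ℝ) : 0 ≤ mfrob A := by
  rw [mfrob_eq_norm]; exact norm_nonneg _

lemma mfrob_add_le (A B : Matrix (Fin n) (Fin m) ℝ) : mfrob (A + B) ≤ mfrob A + mfrob B := by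
  simp only [mfrob_eq_norm, toE_add]; exact norm_add_le _ _

lemma mfrob_sub_comm (A B : Matrix (Fin n) (Fin m) ℝ) : mfrob (A - B) = mfrob (B - A) := by
  simp only [mfrob_eq_norm, toE_sub]; exact norm_sub_rev _ _

lemma mfrob_neg (A : Matrix (Fin n) (Fin m) ℝ) : mfrob (-A) = mfrob A := by
  have : -A = 0 - A := by abel
  rw [this, mfrob_sub_comm]; simp

lemma mfrob_sub_le (A B C : Matrix (Fin n) (Fin m) ℝ) :
    mfrob (A - C) ≤ mfrob (A - B) + mfrob (B - C) := by
  have : A - C = (A - B) + (B - C) := by abel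
  rw [this]; exact mfrob_add_le _ _

lemma mfrob_sq (A : Matrix (Fin n) (Fin m) ℝ) : mfrob A ^ 2 = trace (A * Aᵀ) := by
  rw [mfrob, Real.sq_sqrt (Finset.sum_nonneg fun a _ => Finset.sum_nonneg fun b _ => sq_nonneg (A a b))]
  simp [Matrix.trace, Matrix.mul_apply, Matrix.diag, sq]

lemma mfrob_eq_of_sq_eq {A : Matrix (Fin n) (Fin m) ℝ} {B : Matrix (Fin p) (Fin q) ℝ}
    (h : mfrob A ^ 2 = mfrob B ^ 2) : mfrob A = mfrob B := by
  have hA := mfrob_nonneg A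
  have hB := mfrob_nonneg B
  nlinarith

end MatrixPS

namespace MatrixPS

variable {n m p q r : ℕ}

lemma mfrob_transpose (A : Matrix (Fin n) (Fin m) ℝ) : mfrob Aᵀ = mfrob A := by
  rw [mfrob, mfrob, Finset.sum_comm]
  simp [Matrix.transpose_apply]

/-- multiplying on the right by `Vᵀ` with `VᵀV = 1` preserves the Frobenius norm -/
lemma mfrob_mul_orthT (X : Matrix (Fin n) (Fin r) ℝ) {V : Matrix (Fin m) (Fin r) ℝ}
    (hV : Vᵀ * V = 1) : mfrob (X * Vᵀ) = mfrob X := by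
  refine mfrob_eq_of_sq_eq ?_
  rw [mfrob_sq, mfrob_sq, Matrix.transpose_mul, Matrix.transpose_transpose]
  rw [show X * Vᵀ * (V * Xᵀ) = X * (Vᵀ * V) * Xᵀ by
    simp only [Matrix.mul_assoc], hV, Matrix.mul_one]

/-- multiplying on the left by `U` with `UᵀU = 1` preserves the Frobenius norm -/
lemma mfrob_orth_mul {U : Matrix (Fin n) (Fin r) ℝ} (hU : Uᵀ * U = 1)
    (X : Matrix (Fin r) (Fin m) ℝ) : mfrob (U * X) = mfrob X := by
  refine mfrob_eq_of_sq_eq ?_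
  rw [mfrob_sq, mfrob_sq, Matrix.transpose_mul]
  rw [show U * X * (Xᵀ * Uᵀ) = U * ((X * Xᵀ) * Uᵀ) by simp only [Matrix.mul_assoc],
    Matrix.trace_mul_comm, Matrix.mul_assoc, hU, Matrix.mul_one]

/-- multiplying on the right by a symmetric idempotent contracts the Frobenius norm -/
lemma mfrob_mul_proj_le (X : Matrix (Fin n) (Fin m) ℝ) {P : Matrix (Fin m) (Fin m) ℝ}
    (hPt : Pᵀ = P) (hP2 : P * P = P) : mfrob (X * P) ≤ mfrob X := by
  have h1 : mfrob (X * P) ^ 2 = trace (X * P * Xᵀ) := by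
    rw [mfrob_sq, Matrix.transpose_mul, hPt,
      show X * P * (P * Xᵀ) = X * (P * P) * Xᵀ by simp only [Matrix.mul_assoc], hP2]
  have h2 : mfrob (X * (1 - P)) ^ 2 = trace (X * Xᵀ) - trace (X * P * Xᵀ) := by
    rw [mfrob_sq, Matrix.transpose_mul, Matrix.transpose_sub, Matrix.transpose_one, hPt]
    rw [show X * (1 - P) * ((1 - P) * Xᵀ) = X * ((1 - P) * (1 - P)) * Xᵀ by
      simp only [Matrix.mul_assoc]]
    have : (1 - P) * (1 - P) = 1 - P := by
      simp only [Matrix.mul_sub, Matrix.sub_mul, Matrix.one_mul, Matrix.mul_one, hP2]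
      abel
    rw [this, Matrix.mul_sub, Matrix.sub_mul, Matrix.mul_one, trace_sub, Matrix.mul_assoc]
  have hXsq : mfrob X ^ 2 = trace (X * Xᵀ) := mfrob_sq X
  have hle : mfrob (X * P) ^ 2 ≤ mfrob X ^ 2 := by nlinarith [sq_nonneg (mfrob (X * (1 - P)))]
  have := mfrob_nonneg (X * P); have := mfrob_nonneg X
  nlinarith

lemma mfrob_proj_mul_le {Q : Matrix (Fin n) (Fin n) ℝ} (hQt : Qᵀ = Q) (hQ2 : Q * Q = Q)
    (X : Matrix (Fin n) (Fin m) ℝ) : mfrob (Q * X) ≤ mfrob X := by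
  rw [← mfrob_transpose (Q * X), Matrix.transpose_mul, hQt, ← mfrob_transpose X]
  exact mfrob_mul_proj_le _ hQt hQ2

lemma proj_transpose {V : Matrix (Fin m) (Fin r) ℝ} : (V * Vᵀ)ᵀ = V * Vᵀ := by
  rw [Matrix.transpose_mul, Matrix.transpose_transpose]

lemma proj_idem {V : Matrix (Fin m) (Fin r) ℝ} (hV : Vᵀ * V = 1) :
    (V * Vᵀ) * (V * Vᵀ) = V * Vᵀ := by
  rw [show V * Vᵀ * (V * Vᵀ) = V * (Vᵀ * V) * Vᵀ by simp only [Matrix.mul_assoc], hV,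
    Matrix.mul_one]

lemma coproj_transpose {V : Matrix (Fin m) (Fin r) ℝ} :
    (1 - V * Vᵀ)ᵀ = 1 - V * Vᵀ := by
  rw [Matrix.transpose_sub, Matrix.transpose_one, proj_transpose]

lemma coproj_idem {V : Matrix (Fin m) (Fin r) ℝ} (hV : Vᵀ * V = 1) :
    (1 - V * Vᵀ) * (1 - V * Vᵀ) = 1 - V * Vᵀ := by
  simp only [Matrix.mul_sub, Matrix.sub_mul, Matrix.one_mul, Matrix.mul_one, proj_idem hV]
  abel

/-- `‖X V‖_F ≤ ‖X‖_F` for `V` with orthonormal columns -/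
lemma mfrob_mul_orthcols_le (X : Matrix (Fin n) (Fin m) ℝ) {V : Matrix (Fin m) (Fin r) ℝ}
    (hV : Vᵀ * V = 1) : mfrob (X * V) ≤ mfrob X := by
  rw [← mfrob_mul_orthT (X * V) hV, Matrix.mul_assoc]
  exact mfrob_mul_proj_le _ proj_transpose (proj_idem hV)

lemma mfrob_orthT_mul_le {U : Matrix (Fin n) (Fin r) ℝ} (hU : Uᵀ * U = 1)
    (X : Matrix (Fin n) (Fin m) ℝ) : mfrob (Uᵀ * X) ≤ mfrob X := by
  rw [← mfrob_transpose (Uᵀ * X), Matrix.transpose_mul, Matrix.transpose_transpose,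
    ← mfrob_transpose X]
  exact mfrob_mul_orthcols_le _ hU

end MatrixPS

namespace MatrixPS

variable {n m p r : ℕ} {s : Set ℝ} {t : ℝ}

lemma hasDeriv_matmul_const {f : ℝ → Matrix (Fin n) (Fin m) ℝ} {f' : Matrix (Fin n) (Fin m) ℝ}
    (C : Matrix (Fin m) (Fin p) ℝ)
    (h : ∀ i j, HasDerivWithinAt (fun u => f u i j) (f' i j) s t) :
    ∀ i j, HasDerivWithinAt (fun u => (f u * C) i j) ((f' * C) i j) s t := by
  intro i j
  simp only [Matrix.mul_apply]
  exact HasDerivWithinAt.fun_sum fun k _ => (h i k).mul_const _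

lemma hasDeriv_const_matmul {f : ℝ → Matrix (Fin m) (Fin p) ℝ} {f' : Matrix (Fin m) (Fin p) ℝ}
    (C : Matrix (Fin n) (Fin m) ℝ)
    (h : ∀ i j, HasDerivWithinAt (fun u => f u i j) (f' i j) s t) :
    ∀ i j, HasDerivWithinAt (fun u => (C * f u) i j) ((C * f') i j) s t := by
  intro i j
  simp only [Matrix.mul_apply]
  exact HasDerivWithinAt.fun_sum fun k _ => (h k j).const_mul _

lemma hasDeriv_transpose {f : ℝ → Matrix (Fin n) (Fin m) ℝ} {f' : Matrix (Fin n) (Fin m) ℝ}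
    (h : ∀ i j, HasDerivWithinAt (fun u => f u i j) (f' i j) s t) :
    ∀ i j, HasDerivWithinAt (fun u => (f u)ᵀ i j) (f'ᵀ i j) s t := by
  intro i j
  simp only [Matrix.transpose_apply]
  exact h j i

lemma hasDeriv_sub {f g : ℝ → Matrix (Fin n) (Fin m) ℝ} {f' g' : Matrix (Fin n) (Fin m) ℝ}
    (hf : ∀ i j, HasDerivWithinAt (fun u => f u i j) (f' i j) s t)
    (hg : ∀ i j, HasDerivWithinAt (fun u => g u i j) (g' i j) s t) :
    ∀ i j, HasDerivWithinAt (fun u => (f u - g u) i j) ((f' - g') i j) s t := by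
  intro i j
  simp only [Matrix.sub_apply]
  exact (hf i j).sub (hg i j)

lemma hasDeriv_add {f g : ℝ → Matrix (Fin n) (Fin m) ℝ} {f' g' : Matrix (Fin n) (Fin m) ℝ}
    (hf : ∀ i j, HasDerivWithinAt (fun u => f u i j) (f' i j) s t)
    (hg : ∀ i j, HasDerivWithinAt (fun u => g u i j) (g' i j) s t) :
    ∀ i j, HasDerivWithinAt (fun u => (f u + g u) i j) ((f' + g') i j) s t := by
  intro i j
  simp only [Matrix.add_apply]
  exact (hf i j).add (hg i j)

lemma hasDerivWithinAt_toE {f : ℝ → Matrix (Fin n) (Fin m) ℝ} {f' : Matrix (Fin n) (Fin m) ℝ}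
    (h : ∀ i j, HasDerivWithinAt (fun u => f u i j) (f' i j) s t) :
    HasDerivWithinAt (fun u => toE (f u)) (toE f') s t := by
  set e := (PiLp.continuousLinearEquiv 2 ℝ (fun _ : Fin n × Fin m => ℝ)).symm
  have hg : HasDerivWithinAt (fun u => (fun x : Fin n × Fin m => f u x.1 x.2))
      (fun x : Fin n × Fin m => f' x.1 x.2) s t :=
    hasDerivWithinAt_pi.2 fun x => h x.1 x.2
  exact (e.toContinuousLinearMap.hasFDerivAt).comp_hasDerivWithinAt t hg

/-- Mean value inequality for the Frobenius norm. -/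
lemma mfrob_mvt {f f' : ℝ → Matrix (Fin n) (Fin m) ℝ} {a b C : ℝ} (hab : a ≤ b)
    (hd : ∀ t ∈ Icc a b, ∀ i j, HasDerivWithinAt (fun u => f u i j) (f' t i j) (Icc a b) t)
    (hC : ∀ t ∈ Icc a b, mfrob (f' t) ≤ C) {x y : ℝ} (hx : x ∈ Icc a b) (hy : y ∈ Icc a b) :
    mfrob (f y - f x) ≤ C * (b - a) := by
  have hC0 : 0 ≤ C := le_trans (mfrob_nonneg _) (hC a ⟨le_refl a, hab⟩)
  have key : ‖toE (f y) - toE (f x)‖ ≤ C * ‖y - x‖ := by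
    refine Convex.norm_image_sub_le_of_norm_hasDerivWithin_le
      (f := fun u => toE (f u)) (f' := fun t => toE (f' t)) ?_ ?_ (convex_Icc a b) hx hy
    · exact fun u hu => hasDerivWithinAt_toE (hd u hu)
    · intro u hu; rw [← mfrob_eq_norm]; exact hC u hu
  rw [mfrob_eq_norm, toE_sub]
  refine key.trans ?_
  have : ‖y - x‖ ≤ b - a := by
    rw [Real.norm_eq_abs, abs_sub_le_iff]
    constructor <;> linarith [hx.1, hx.2, hy.1, hy.2]
  nlinarith

end MatrixPS

namespace MatrixPS

variable {n m r : ℕ}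

lemma eval_charpoly' (M : Matrix (Fin r) (Fin r) ℝ) (x : ℝ) :
    M.charpoly.eval x = (x • (1 : Matrix (Fin r) (Fin r) ℝ) - M).det := by
  rw [Matrix.charpoly, show Polynomial.eval x = ⇑(Polynomial.evalRingHom x) from rfl,
    RingHom.map_det]
  congr 1
  ext i j
  by_cases h : i = j
  · subst h
    simp [Matrix.charmatrix_apply_eq, Matrix.map_apply, Matrix.one_apply, Matrix.smul_apply]
  · simp [Matrix.charmatrix_apply_ne _ _ _ h, Matrix.map_apply, Matrix.one_apply, h,
      Matrix.smul_apply]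

lemma exists_isUnit_add_smul_one (S : Matrix (Fin r) (Fin r) ℝ) {δ0 : ℝ} (hδ0 : 0 < δ0) :
    ∃ δ : ℝ, 0 < δ ∧ δ < δ0 ∧ IsUnit (S + δ • (1 : Matrix (Fin r) (Fin r) ℝ)) := by
  set p := (-S).charpoly with hp
  have hmonic : p.Monic := Matrix.charpoly_monic _
  have hpne : p ≠ 0 := hmonic.ne_zero
  obtain ⟨δ, hδmem, hδ⟩ := (Set.Ioo_infinite hδ0).exists_notMem_finset p.roots.toFinset
  refine ⟨δ, hδmem.1, hδmem.2, ?_⟩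
  rw [Matrix.isUnit_iff_isUnit_det, isUnit_iff_ne_zero]
  have hev : p.eval δ ≠ 0 := by
    intro hev
    exact hδ (Multiset.mem_toFinset.2 ((Polynomial.mem_roots hpne).2 hev))
  have : p.eval δ = (S + δ • (1 : Matrix (Fin r) (Fin r) ℝ)).det := by
    rw [hp, eval_charpoly']
    congr 1
    abel
  rwa [this] at hev

lemma mfrob_smul_one_le {δ : ℝ} (hδ : 0 ≤ δ) :
    mfrob (δ • (1 : Matrix (Fin r) (Fin r) ℝ)) ≤ δ * r := by
  rw [mfrob]
  have hle : (∑ a : Fin r, ∑ b : Fin r, (δ • (1 : Matrix (Fin r) (Fin r) ℝ)) a b ^ 2)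
      ≤ ∑ _a : Fin r, ∑ _b : Fin r, δ ^ 2 := by
    refine Finset.sum_le_sum fun a _ => Finset.sum_le_sum fun b _ => ?_
    simp only [Matrix.smul_apply, Matrix.one_apply, smul_eq_mul]
    by_cases h : a = b <;> simp [h] <;> positivity
  refine (Real.sqrt_le_sqrt hle).trans ?_
  have : (∑ _a : Fin r, ∑ _b : Fin r, δ ^ 2) = (δ * r) ^ 2 := by
    simp [Finset.sum_const, Finset.card_univ]
    ring
  rw [this, Real.sqrt_sq (by positivity)]

end MatrixPS

namespace MatrixPS

/-- By density of invertible matrices, the `ε`-bound on the non-tangential part extends to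
non-invertible middle factors `S`. -/
lemma eps_ext {n1 n2 r : ℕ} {F : ℝ → Matrix (Fin n1) (Fin n2) ℝ → Matrix (Fin n1) (Fin n2) ℝ}
    {t0 T L' ε : ℝ} (hL' : 0 ≤ L')
    (hLip : ∀ t ∈ Icc t0 T, ∀ Y Y', mfrob (F t Y - F t Y') ≤ L' * mfrob (Y - Y'))
    (hε : ∀ t ∈ Icc t0 T, ∀ (U : Matrix (Fin n1) (Fin r) ℝ) (S : Matrix (Fin r) (Fin r) ℝ)
       (V : Matrix (Fin n2) (Fin r) ℝ), Uᵀ * U = 1 → Vᵀ * V = 1 → IsUnit S →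
       mfrob ((1 - U * Uᵀ) * F t (U * S * Vᵀ) * (1 - V * Vᵀ)) ≤ ε) :
    ∀ t ∈ Icc t0 T, ∀ (U : Matrix (Fin n1) (Fin r) ℝ) (S : Matrix (Fin r) (Fin r) ℝ)
       (V : Matrix (Fin n2) (Fin r) ℝ), Uᵀ * U = 1 → Vᵀ * V = 1 →
       mfrob ((1 - U * Uᵀ) * F t (U * S * Vᵀ) * (1 - V * Vᵀ)) ≤ ε := by
  intro t ht U S V hU hV
  refine le_of_forall_pos_le_add fun η hη => ?_
  obtain ⟨δ, hδ0, hδlt, hδunit⟩ :=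
    exists_isUnit_add_smul_one S (δ0 := η / ((L' + 1) * (r + 1))) (by positivity)
  set S' := S + δ • (1 : Matrix (Fin r) (Fin r) ℝ) with hS'
  have hbound := hε t ht U S' V hU hV hδunit
  have hdiff : mfrob ((1 - U * Uᵀ) * F t (U * S * Vᵀ) * (1 - V * Vᵀ)
      - (1 - U * Uᵀ) * F t (U * S' * Vᵀ) * (1 - V * Vᵀ))
      ≤ L' * (δ * r) := by
    have heq : (1 - U * Uᵀ) * F t (U * S * Vᵀ) * (1 - V * Vᵀ)
        - (1 - U * Uᵀ) * F t (U * S' * Vᵀ) * (1 - V * Vᵀ)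
        = (1 - U * Uᵀ) * (F t (U * S * Vᵀ) - F t (U * S' * Vᵀ)) * (1 - V * Vᵀ) := by
      simp only [Matrix.mul_sub, Matrix.sub_mul]
      abel
    rw [heq]
    have h1 : mfrob ((1 - U * Uᵀ) * (F t (U * S * Vᵀ) - F t (U * S' * Vᵀ)) * (1 - V * Vᵀ))
        ≤ mfrob (F t (U * S * Vᵀ) - F t (U * S' * Vᵀ)) :=
      le_trans (mfrob_mul_proj_le _ coproj_transpose (coproj_idem hV))
        (mfrob_proj_mul_le coproj_transpose (coproj_idem hU) _)
    refine h1.trans ?_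
    have h2 := hLip t ht (U * S * Vᵀ) (U * S' * Vᵀ)
    refine h2.trans ?_
    have h3 : U * S * Vᵀ - U * S' * Vᵀ = U * (-(δ • (1 : Matrix (Fin r) (Fin r) ℝ))) * Vᵀ := by
      simp only [hS']
      simp only [Matrix.mul_add, Matrix.add_mul, Matrix.mul_neg, Matrix.neg_mul]
      abel
    rw [h3, mfrob_mul_orthT _ hV, mfrob_orth_mul hU, mfrob_neg]
    exact mul_le_mul_of_nonneg_left (mfrob_smul_one_le hδ0.le) hL'
  have tri : mfrob ((1 - U * Uᵀ) * F t (U * S * Vᵀ) * (1 - V * Vᵀ))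
      ≤ mfrob ((1 - U * Uᵀ) * F t (U * S * Vᵀ) * (1 - V * Vᵀ)
          - (1 - U * Uᵀ) * F t (U * S' * Vᵀ) * (1 - V * Vᵀ))
        + mfrob ((1 - U * Uᵀ) * F t (U * S' * Vᵀ) * (1 - V * Vᵀ)) := by
    have h := mfrob_add_le ((1 - U * Uᵀ) * F t (U * S * Vᵀ) * (1 - V * Vᵀ)
          - (1 - U * Uᵀ) * F t (U * S' * Vᵀ) * (1 - V * Vᵀ))
        ((1 - U * Uᵀ) * F t (U * S' * Vᵀ) * (1 - V * Vᵀ))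
    rwa [sub_add_cancel] at h
  have hfinal : L' * (δ * r) ≤ η := by
    have hlt : δ * ((L' + 1) * (r + 1)) < η := by
      have := (lt_div_iff₀ (by positivity : (0:ℝ) < (L' + 1) * (r + 1))).1 hδlt
      linarith
    nlinarith [hδ0.le, Nat.cast_nonneg (α := ℝ) r]
  linarith [tri, hdiff, hbound]

end MatrixPS

namespace MatrixPS

lemma mfrob_sub_le' {n m : ℕ} (A B : Matrix (Fin n) (Fin m) ℝ) :
    mfrob (A - B) ≤ mfrob A + mfrob B := by
  have h := mfrob_add_le A (-B)
  rw [mfrob_neg] at h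
  rwa [sub_eq_add_neg]

lemma mfrob_le_sub_add {n m : ℕ} (X Y : Matrix (Fin n) (Fin m) ℝ) :
    mfrob X ≤ mfrob (X - Y) + mfrob Y := by
  have h := mfrob_add_le (X - Y) Y
  rwa [sub_add_cancel] at h

lemma mfrob_add₄_le {n m : ℕ} (x1 x2 x3 x4 : Matrix (Fin n) (Fin m) ℝ) :
    mfrob (x1 + x2 + x3 + x4) ≤ mfrob x1 + mfrob x2 + mfrob x3 + mfrob x4 := by
  calc mfrob (x1 + x2 + x3 + x4) ≤ mfrob (x1 + x2 + x3) + mfrob x4 := mfrob_add_le _ _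
  _ ≤ (mfrob (x1 + x2) + mfrob x3) + mfrob x4 := by linarith [mfrob_add_le (x1 + x2) x3]
  _ ≤ _ := by linarith [mfrob_add_le x1 x2]


/-- One step of the matrix projector-splitting integrator from `t0` to `t1`, from the
factorization `U0 S0 V0ᵀ` to the factorization `U1 S1 V1ᵀ`, with all three substep
differential equations (K-step, S-step, L-step) solved exactly, and with QR
factorizations after the K- and L-steps. -/
def MatStep {n1 n2 r : ℕ}
    (F : ℝ → Matrix (Fin n1) (Fin n2) ℝ → Matrix (Fin n1) (Fin n2) ℝ)
    (t0 t1 : ℝ)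
    (U0 : Matrix (Fin n1) (Fin r) ℝ) (S0 : Matrix (Fin r) (Fin r) ℝ)
    (V0 : Matrix (Fin n2) (Fin r) ℝ)
    (U1 : Matrix (Fin n1) (Fin r) ℝ) (S1 : Matrix (Fin r) (Fin r) ℝ)
    (V1 : Matrix (Fin n2) (Fin r) ℝ) : Prop :=
  ∃ (K : ℝ → Matrix (Fin n1) (Fin r) ℝ) (Shat : Matrix (Fin r) (Fin r) ℝ)
    (S : ℝ → Matrix (Fin r) (Fin r) ℝ) (Lf : ℝ → Matrix (Fin n2) (Fin r) ℝ),
    -- K-step:  K̇(t) = F(t, K(t) V0ᵀ) V0,  K(t0) = U0 S0,  QR:  K(t1) = U1 Ŝ1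
    K t0 = U0 * S0 ∧
    (∀ t ∈ Icc t0 t1, ∀ a b, HasDerivWithinAt (fun s => K s a b)
      ((F t (K t * V0ᵀ) * V0) a b) (Icc t0 t1) t) ∧
    K t1 = U1 * Shat ∧ U1ᵀ * U1 = 1 ∧
    -- S-step:  Ṡ(t) = -U1ᵀ F(t, U1 S(t) V0ᵀ) V0,  S(t0) = Ŝ1
    S t0 = Shat ∧
    (∀ t ∈ Icc t0 t1, ∀ a b, HasDerivWithinAt (fun s => S s a b)
      ((-(U1ᵀ * F t (U1 * S t * V0ᵀ) * V0)) a b) (Icc t0 t1) t) ∧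
    -- L-step:  L̇(t)ᵀ = U1ᵀ F(t, U1 L(t)ᵀ),  L(t0)ᵀ = S(t1) V0ᵀ,  QR:  L(t1) = V1 S1ᵀ
    Lf t0 = V0 * (S t1)ᵀ ∧
    (∀ t ∈ Icc t0 t1, ∀ a b, HasDerivWithinAt (fun s => Lf s a b)
      (((U1ᵀ * F t (U1 * (Lf t)ᵀ))ᵀ) a b) (Icc t0 t1) t) ∧
    Lf t1 = V1 * S1ᵀ ∧ V1ᵀ * V1 = 1

/-- One-step error estimate for the projector-splitting integrator. -/
lemma one_step {n1 n2 r : ℕ}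
    {F : ℝ → Matrix (Fin n1) (Fin n2) ℝ → Matrix (Fin n1) (Fin n2) ℝ}
    {A : ℝ → Matrix (Fin n1) (Fin n2) ℝ} {t0 T L' B' ε : ℝ}
    (hL' : 0 ≤ L') (hB' : 0 ≤ B')
    (hLip : ∀ t ∈ Icc t0 T, ∀ Y Y', mfrob (F t Y - F t Y') ≤ L' * mfrob (Y - Y'))
    (hBd : ∀ t ∈ Icc t0 T, ∀ Y, mfrob (F t Y) ≤ B')
    (hA : ∀ t ∈ Icc t0 T, ∀ i j,
        HasDerivWithinAt (fun s => A s i j) (F t (A t) i j) (Icc t0 T) t)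
    (hεb : ∀ t ∈ Icc t0 T, ∀ (U : Matrix (Fin n1) (Fin r) ℝ) (S : Matrix (Fin r) (Fin r) ℝ)
       (V : Matrix (Fin n2) (Fin r) ℝ), Uᵀ * U = 1 → Vᵀ * V = 1 →
       mfrob ((1 - U * Uᵀ) * F t (U * S * Vᵀ) * (1 - V * Vᵀ)) ≤ ε)
    {a b : ℝ} (hab : a ≤ b) (ha : t0 ≤ a) (hbT : b ≤ T)
    {U0 : Matrix (Fin n1) (Fin r) ℝ} {S0 : Matrix (Fin r) (Fin r) ℝ}
    {V0 : Matrix (Fin n2) (Fin r) ℝ}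
    {U1 : Matrix (Fin n1) (Fin r) ℝ} {S1 : Matrix (Fin r) (Fin r) ℝ}
    {V1 : Matrix (Fin n2) (Fin r) ℝ}
    (hV0 : V0ᵀ * V0 = 1)
    (hstep : MatStep F a b U0 S0 V0 U1 S1 V1) :
    mfrob (U1 * S1 * V1ᵀ - A b) ≤ mfrob (U0 * S0 * V0ᵀ - A a)
      + (b - a) * (ε + L' * ((7 + 3 * L' * (b - a)) * mfrob (U0 * S0 * V0ᵀ - A a)
          + (12 * B' + 6 * L' * B' * (b - a)) * (b - a))) := by
  obtain ⟨K, Shat, S, Lf, hKa, hKd, hKb, hU1, hSa, hSd, hLa, hLd, hLb, hV1⟩ := hstep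
  have hsub : Icc a b ⊆ Icc t0 T := Icc_subset_Icc ha hbT
  have hamem : a ∈ Icc a b := ⟨le_refl a, hab⟩
  have hbmem : b ∈ Icc a b := ⟨hab, le_refl b⟩
  set e0 := mfrob (U0 * S0 * V0ᵀ - A a) with he0def
  have he0 : 0 ≤ e0 := mfrob_nonneg _
  set h := b - a with hhdef
  have hh : 0 ≤ h := by simp [hhdef]; linarith
  set m1 : ℝ := e0 + 2 * B' * h with hm1def
  set dK : ℝ := e0 + L' * m1 * h with hdKdef
  set m3 : ℝ := dK + e0 + 3 * B' * h with hm3def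
  set m4 : ℝ := m3 + 2 * B' * h with hm4def
  set m5 : ℝ := dK + e0 + 2 * B' * h with hm5def
  -- algebraic facts about the factorizations
  have hKaV : K a * V0ᵀ = U0 * S0 * V0ᵀ := by rw [hKa]
  have hKbV : K b * V0ᵀ = U1 * Shat * V0ᵀ := by rw [hKb]
  have hZa : U1 * S a * V0ᵀ = K b * V0ᵀ := by rw [hSa, hKb]
  have hWa : U1 * (Lf a)ᵀ = U1 * S b * V0ᵀ := by
    rw [hLa, Matrix.transpose_mul, Matrix.transpose_transpose, ← Matrix.mul_assoc]
  have hWb : U1 * (Lf b)ᵀ = U1 * S1 * V1ᵀ := by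
    rw [hLb, Matrix.transpose_mul, Matrix.transpose_transpose, ← Matrix.mul_assoc]
  have hY0P : (U0 * S0 * V0ᵀ) * (V0 * V0ᵀ) = U0 * S0 * V0ᵀ := by
    simp only [Matrix.mul_assoc]
    rw [← Matrix.mul_assoc V0ᵀ V0 V0ᵀ, hV0, Matrix.one_mul]
  have hY0coP : (U0 * S0 * V0ᵀ) * (1 - V0 * V0ᵀ) = 0 := by
    rw [Matrix.mul_sub, Matrix.mul_one, hY0P, sub_self]
  -- norm bounds for projected values of F
  have hFP : ∀ t ∈ Icc a b, ∀ Y, mfrob (F t Y * V0 * V0ᵀ) ≤ B' := by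
    intro t ht Y
    rw [mfrob_mul_orthT _ hV0]
    exact (mfrob_mul_orthcols_le _ hV0).trans (hBd t (hsub ht) Y)
  have hFcoP : ∀ t ∈ Icc a b, ∀ Y, mfrob (F t Y * (1 - V0 * V0ᵀ)) ≤ B' := fun t ht Y =>
    (mfrob_mul_proj_le _ coproj_transpose (coproj_idem hV0)).trans (hBd t (hsub ht) Y)
  -- the exact solution moves slowly
  have hAd : ∀ t ∈ Icc a b, ∀ i j,
      HasDerivWithinAt (fun s => A s i j) (F t (A t) i j) (Icc a b) t :=
    fun t ht i j => (hA t (hsub ht) i j).mono hsub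
  have hAdrift : ∀ x ∈ Icc a b, ∀ y ∈ Icc a b, mfrob (A y - A x) ≤ B' * h := by
    intro x hx y hy
    exact mfrob_mvt hab hAd (fun t ht => hBd t (hsub ht) _) hx hy
  -- (1) K-step vs exact solution, crude bound
  have hdKV : ∀ t ∈ Icc a b, ∀ i j,
      HasDerivWithinAt (fun u => (K u * V0ᵀ - A u) i j)
        ((F t (K t * V0ᵀ) * V0 * V0ᵀ - F t (A t)) i j) (Icc a b) t :=
    fun t ht => hasDeriv_sub (hasDeriv_matmul_const V0ᵀ (hKd t ht)) (hAd t ht)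
  have hKA : ∀ t ∈ Icc a b, mfrob (K t * V0ᵀ - A t) ≤ m1 := by
    intro t ht
    have hbound : ∀ u ∈ Icc a b,
        mfrob (F u (K u * V0ᵀ) * V0 * V0ᵀ - F u (A u)) ≤ 2 * B' := by
      intro u hu
      refine (mfrob_sub_le' _ _).trans ?_
      have h1 := hFP u hu (K u * V0ᵀ)
      have h2 := hBd u (hsub hu) (A u)
      linarith
    have hmv := mfrob_mvt hab hdKV hbound hamem ht
    have htri := mfrob_le_sub_add (K t * V0ᵀ - A t) (K a * V0ᵀ - A a)
    rw [hKaV] at htri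
    rw [hm1def]
    have h2 : mfrob (K t * V0ᵀ - A t - (K a * V0ᵀ - A a)) ≤ 2 * B' * h := by
      rw [hhdef]
      calc mfrob (K t * V0ᵀ - A t - (K a * V0ᵀ - A a)) ≤ 2 * B' * (b - a) := hmv
      _ = 2 * B' * (b - a) := rfl
    rw [hKaV] at h2
    linarith
  -- (2) non-range part of the exact solution stays small
  have hA1P : ∀ t ∈ Icc a b, mfrob (A t * (1 - V0 * V0ᵀ)) ≤ e0 + B' * h := by
    intro t ht
    have hdrv : ∀ u ∈ Icc a b, ∀ (i : Fin n1) (j : Fin n2),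
        HasDerivWithinAt
          (fun s => (A s * (1 - V0 * V0ᵀ) : Matrix (Fin n1) (Fin n2) ℝ) i j)
          ((F u (A u) * (1 - V0 * V0ᵀ) : Matrix (Fin n1) (Fin n2) ℝ) i j) (Icc a b) u :=
      fun u hu => hasDeriv_matmul_const (1 - V0 * V0ᵀ) (hAd u hu)
    have hmv := mfrob_mvt hab hdrv (fun u hu => hFcoP u hu (A u)) hamem ht
    have hinit : mfrob (A a * (1 - V0 * V0ᵀ)) ≤ e0 := by
      have hrw : A a * (1 - V0 * V0ᵀ) = (A a - U0 * S0 * V0ᵀ) * (1 - V0 * V0ᵀ) := by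
        rw [Matrix.sub_mul, hY0coP, sub_zero]
      rw [hrw]
      refine (mfrob_mul_proj_le _ coproj_transpose (coproj_idem hV0)).trans ?_
      rw [mfrob_sub_comm]
    have htri := mfrob_le_sub_add (A t * (1 - V0 * V0ᵀ)) (A a * (1 - V0 * V0ᵀ))
    have : mfrob (A t * (1 - V0 * V0ᵀ) - A a * (1 - V0 * V0ᵀ)) ≤ B' * h := by
      rw [hhdef]; exact hmv
    linarith
  -- (3) K-step vs projected exact solution, refined bound
  have hdKbound : mfrob (K b * V0ᵀ - A b * (V0 * V0ᵀ)) ≤ dK := by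
    have hdrv : ∀ t ∈ Icc a b, ∀ i j,
        HasDerivWithinAt (fun u => (K u * V0ᵀ - A u * (V0 * V0ᵀ)) i j)
          ((F t (K t * V0ᵀ) * V0 * V0ᵀ - F t (A t) * (V0 * V0ᵀ)) i j) (Icc a b) t :=
      fun t ht => hasDeriv_sub (hasDeriv_matmul_const V0ᵀ (hKd t ht))
        (hasDeriv_matmul_const _ (hAd t ht))
    have hbound : ∀ t ∈ Icc a b,
        mfrob (F t (K t * V0ᵀ) * V0 * V0ᵀ - F t (A t) * (V0 * V0ᵀ)) ≤ L' * m1 := by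
      intro t ht
      have hrw : F t (K t * V0ᵀ) * V0 * V0ᵀ - F t (A t) * (V0 * V0ᵀ)
          = (F t (K t * V0ᵀ) - F t (A t)) * (V0 * V0ᵀ) := by
        rw [Matrix.sub_mul, Matrix.mul_assoc]
      rw [hrw]
      refine (mfrob_mul_proj_le _ proj_transpose (proj_idem hV0)).trans ?_
      refine (hLip t (hsub ht) _ _).trans ?_
      exact mul_le_mul_of_nonneg_left (hKA t ht) hL'
    have hmv := mfrob_mvt hab hdrv hbound hamem hbmem
    have hinit : mfrob (K a * V0ᵀ - A a * (V0 * V0ᵀ)) ≤ e0 := by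
      rw [hKaV]
      have hrw : U0 * S0 * V0ᵀ - A a * (V0 * V0ᵀ)
          = (U0 * S0 * V0ᵀ - A a) * (V0 * V0ᵀ) := by
        rw [Matrix.sub_mul, hY0P]
      rw [hrw]
      exact mfrob_mul_proj_le _ proj_transpose (proj_idem hV0)
    have htri := mfrob_le_sub_add (K b * V0ᵀ - A b * (V0 * V0ᵀ)) (K a * V0ᵀ - A a * (V0 * V0ᵀ))
    rw [hdKdef]
    have : mfrob (K b * V0ᵀ - A b * (V0 * V0ᵀ) - (K a * V0ᵀ - A a * (V0 * V0ᵀ)))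
        ≤ L' * m1 * h := by rw [hhdef]; exact hmv
    linarith
  -- (4) S-step moves slowly
  have hZdrift : ∀ t ∈ Icc a b, mfrob (U1 * S t * V0ᵀ - U1 * S a * V0ᵀ) ≤ B' * h := by
    intro t ht
    have hdrv : ∀ u ∈ Icc a b, ∀ i j,
        HasDerivWithinAt (fun s => (U1 * S s * V0ᵀ) i j)
          ((U1 * (-(U1ᵀ * F u (U1 * S u * V0ᵀ) * V0)) * V0ᵀ) i j) (Icc a b) u :=
      fun u hu => hasDeriv_matmul_const V0ᵀ (hasDeriv_const_matmul U1 (hSd u hu))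
    have hbound : ∀ u ∈ Icc a b,
        mfrob (U1 * (-(U1ᵀ * F u (U1 * S u * V0ᵀ) * V0)) * V0ᵀ) ≤ B' := by
      intro u hu
      rw [mfrob_mul_orthT _ hV0, mfrob_orth_mul hU1, mfrob_neg]
      exact (mfrob_mul_orthcols_le _ hV0).trans
        ((mfrob_orthT_mul_le hU1 _).trans (hBd u (hsub hu) _))
    have hmv := mfrob_mvt hab hdrv hbound hamem ht
    rw [hhdef]; exact hmv
  -- (5) S-step vs exact solution
  have hZA : ∀ t ∈ Icc a b, mfrob (U1 * S t * V0ᵀ - A t) ≤ m3 := by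
    intro t ht
    have hsplit : U1 * S t * V0ᵀ - A t
        = (U1 * S t * V0ᵀ - U1 * S a * V0ᵀ) + (U1 * S a * V0ᵀ - A b * (V0 * V0ᵀ))
          + ((A b - A t) * (V0 * V0ᵀ)) + (-(A t * (1 - V0 * V0ᵀ))) := by
      simp only [Matrix.sub_mul, Matrix.mul_sub, Matrix.mul_one]
      abel
    rw [hsplit]
    refine (mfrob_add₄_le _ _ _ _).trans ?_
    have h1 := hZdrift t ht
    have h2 : mfrob (U1 * S a * V0ᵀ - A b * (V0 * V0ᵀ)) ≤ dK := by rw [hZa]; exact hdKbound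
    have h3 : mfrob ((A b - A t) * (V0 * V0ᵀ)) ≤ B' * h :=
      (mfrob_mul_proj_le _ proj_transpose (proj_idem hV0)).trans (hAdrift t ht b hbmem)
    have h4 : mfrob (-(A t * (1 - V0 * V0ᵀ))) ≤ e0 + B' * h := by
      rw [mfrob_neg]; exact hA1P t ht
    rw [hm3def]
    linarith
  -- (6) L-step moves slowly
  have hWdrift : ∀ t ∈ Icc a b, mfrob (U1 * (Lf t)ᵀ - U1 * (Lf a)ᵀ) ≤ B' * h := by
    intro t ht
    have hdrv : ∀ u ∈ Icc a b, ∀ i j,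
        HasDerivWithinAt (fun s => (U1 * (Lf s)ᵀ) i j)
          ((U1 * ((U1ᵀ * F u (U1 * (Lf u)ᵀ))ᵀ)ᵀ) i j) (Icc a b) u :=
      fun u hu => hasDeriv_const_matmul U1 (hasDeriv_transpose (hLd u hu))
    have hbound : ∀ u ∈ Icc a b,
        mfrob (U1 * ((U1ᵀ * F u (U1 * (Lf u)ᵀ))ᵀ)ᵀ) ≤ B' := by
      intro u hu
      rw [Matrix.transpose_transpose, mfrob_orth_mul hU1]
      exact (mfrob_orthT_mul_le hU1 _).trans (hBd u (hsub hu) _)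
    have hmv := mfrob_mvt hab hdrv hbound hamem ht
    rw [hhdef]; exact hmv
  -- (7) L-step vs exact solution
  have hWA : ∀ t ∈ Icc a b, mfrob (U1 * (Lf t)ᵀ - A t) ≤ m4 := by
    intro t ht
    have hsplit : U1 * (Lf t)ᵀ - A t
        = (U1 * (Lf t)ᵀ - U1 * (Lf a)ᵀ) + (U1 * (Lf a)ᵀ - A b) + (A b - A t) + 0 := by abel
    rw [hsplit]
    refine (mfrob_add₄_le _ _ _ _).trans ?_
    have h1 := hWdrift t ht
    have h2 : mfrob (U1 * (Lf a)ᵀ - A b) ≤ m3 := by rw [hWa]; exact hZA b hbmem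
    have h3 := hAdrift t ht b hbmem
    have h4 : mfrob (0 : Matrix (Fin n1) (Fin n2) ℝ) = 0 := by
      rw [mfrob_eq_norm]
      have : toE (0 : Matrix (Fin n1) (Fin n2) ℝ) = 0 := rfl
      rw [this, norm_zero]
    rw [hm4def, hm3def]
    rw [hm3def] at h2
    linarith
  -- (8) exact solution vs the rank-r point U1 Shat V0ᵀ
  have hAK : ∀ t ∈ Icc a b, mfrob (A t - U1 * Shat * V0ᵀ) ≤ m5 := by
    intro t ht
    rw [← hKbV]
    have hsplit : A t - K b * V0ᵀ
        = (A t - A b) + (A b * (1 - V0 * V0ᵀ)) + (-(K b * V0ᵀ - A b * (V0 * V0ᵀ))) + 0 := by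
      simp only [Matrix.mul_sub, Matrix.mul_one]
      abel
    rw [hsplit]
    refine (mfrob_add₄_le _ _ _ _).trans ?_
    have h1 := hAdrift b hbmem t ht
    have h2 := hA1P b hbmem
    have h3 : mfrob (-(K b * V0ᵀ - A b * (V0 * V0ᵀ))) ≤ dK := by
      rw [mfrob_neg]; exact hdKbound
    have h4 : mfrob (0 : Matrix (Fin n1) (Fin n2) ℝ) = 0 := by
      rw [mfrob_eq_norm]
      have : toE (0 : Matrix (Fin n1) (Fin n2) ℝ) = 0 := rfl
      rw [this, norm_zero]
    rw [hm5def]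
    linarith
  -- (9) the grand mean-value estimate
  set Cg : ℝ := L' * m4 + L' * m3 + L' * m1 + (L' * m5 + ε) with hCgdef
  have hdG : ∀ t ∈ Icc a b, ∀ i j,
      HasDerivWithinAt
        (fun u => (U1 * (Lf u)ᵀ + U1 * S u * V0ᵀ + K u * V0ᵀ - A u) i j)
        ((U1 * ((U1ᵀ * F t (U1 * (Lf t)ᵀ))ᵀ)ᵀ
          + U1 * (-(U1ᵀ * F t (U1 * S t * V0ᵀ) * V0)) * V0ᵀ
          + F t (K t * V0ᵀ) * V0 * V0ᵀ - F t (A t)) i j) (Icc a b) t := by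
    intro t ht
    exact hasDeriv_sub
      (hasDeriv_add
        (hasDeriv_add (hasDeriv_const_matmul U1 (hasDeriv_transpose (hLd t ht)))
          (hasDeriv_matmul_const V0ᵀ (hasDeriv_const_matmul U1 (hSd t ht))))
        (hasDeriv_matmul_const V0ᵀ (hKd t ht)))
      (hAd t ht)
  have hGbound : ∀ t ∈ Icc a b,
      mfrob (U1 * ((U1ᵀ * F t (U1 * (Lf t)ᵀ))ᵀ)ᵀ
          + U1 * (-(U1ᵀ * F t (U1 * S t * V0ᵀ) * V0)) * V0ᵀ
          + F t (K t * V0ᵀ) * V0 * V0ᵀ - F t (A t)) ≤ Cg := by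
    intro t ht
    have hrw : U1 * ((U1ᵀ * F t (U1 * (Lf t)ᵀ))ᵀ)ᵀ
          + U1 * (-(U1ᵀ * F t (U1 * S t * V0ᵀ) * V0)) * V0ᵀ
          + F t (K t * V0ᵀ) * V0 * V0ᵀ - F t (A t)
        = (U1 * U1ᵀ) * (F t (U1 * (Lf t)ᵀ) - F t (A t))
          + (-((U1 * U1ᵀ) * (F t (U1 * S t * V0ᵀ) - F t (A t)) * (V0 * V0ᵀ)))
          + (F t (K t * V0ᵀ) - F t (A t)) * (V0 * V0ᵀ)
          + (-((1 - U1 * U1ᵀ) * F t (A t) * (1 - V0 * V0ᵀ))) := by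
      simp only [Matrix.transpose_transpose, Matrix.mul_sub, Matrix.sub_mul,
        Matrix.mul_one, Matrix.one_mul, Matrix.mul_neg, Matrix.neg_mul, Matrix.mul_assoc]
      abel
    rw [hrw]
    refine (mfrob_add₄_le _ _ _ _).trans ?_
    have hQt : (U1 * U1ᵀ)ᵀ = U1 * U1ᵀ := proj_transpose
    have hQ2 : (U1 * U1ᵀ) * (U1 * U1ᵀ) = U1 * U1ᵀ := proj_idem hU1
    have h1 : mfrob ((U1 * U1ᵀ) * (F t (U1 * (Lf t)ᵀ) - F t (A t))) ≤ L' * m4 := by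
      refine (mfrob_proj_mul_le hQt hQ2 _).trans ?_
      refine (hLip t (hsub ht) _ _).trans ?_
      exact mul_le_mul_of_nonneg_left (hWA t ht) hL'
    have h2 : mfrob (-((U1 * U1ᵀ) * (F t (U1 * S t * V0ᵀ) - F t (A t)) * (V0 * V0ᵀ)))
        ≤ L' * m3 := by
      rw [mfrob_neg]
      refine (mfrob_mul_proj_le _ proj_transpose (proj_idem hV0)).trans ?_
      refine (mfrob_proj_mul_le hQt hQ2 _).trans ?_
      refine (hLip t (hsub ht) _ _).trans ?_
      exact mul_le_mul_of_nonneg_left (hZA t ht) hL'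
    have h3 : mfrob ((F t (K t * V0ᵀ) - F t (A t)) * (V0 * V0ᵀ)) ≤ L' * m1 := by
      refine (mfrob_mul_proj_le _ proj_transpose (proj_idem hV0)).trans ?_
      refine (hLip t (hsub ht) _ _).trans ?_
      exact mul_le_mul_of_nonneg_left (hKA t ht) hL'
    have h4 : mfrob (-((1 - U1 * U1ᵀ) * F t (A t) * (1 - V0 * V0ᵀ))) ≤ L' * m5 + ε := by
      rw [mfrob_neg]
      have hsplit4 : (1 - U1 * U1ᵀ) * F t (A t) * (1 - V0 * V0ᵀ)
          = (1 - U1 * U1ᵀ) * (F t (A t) - F t (U1 * Shat * V0ᵀ)) * (1 - V0 * V0ᵀ)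
            + (1 - U1 * U1ᵀ) * F t (U1 * Shat * V0ᵀ) * (1 - V0 * V0ᵀ) := by
        simp only [Matrix.mul_sub, Matrix.sub_mul]
        abel
      rw [hsplit4]
      refine (mfrob_add_le _ _).trans ?_
      have ha4 : mfrob ((1 - U1 * U1ᵀ) * (F t (A t) - F t (U1 * Shat * V0ᵀ)) * (1 - V0 * V0ᵀ))
          ≤ L' * m5 := by
        refine (mfrob_mul_proj_le _ coproj_transpose (coproj_idem hV0)).trans ?_
        refine (mfrob_proj_mul_le coproj_transpose (coproj_idem hU1) _).trans ?_
        refine (hLip t (hsub ht) _ _).trans ?_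
        exact mul_le_mul_of_nonneg_left (hAK t ht) hL'
      have hb4 : mfrob ((1 - U1 * U1ᵀ) * F t (U1 * Shat * V0ᵀ) * (1 - V0 * V0ᵀ)) ≤ ε :=
        hεb t (hsub ht) U1 Shat V0 hU1 hV0
      linarith
    rw [hCgdef]
    linarith
  have hG := mfrob_mvt hab hdG hGbound hamem hbmem
  -- (10) conclusion
  have hkey : U1 * S1 * V1ᵀ - A b = (U0 * S0 * V0ᵀ - A a)
      + ((U1 * (Lf b)ᵀ + U1 * S b * V0ᵀ + K b * V0ᵀ - A b)
        - (U1 * (Lf a)ᵀ + U1 * S a * V0ᵀ + K a * V0ᵀ - A a)) := by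
    rw [hWb, hWa, hZa, hKaV]
    abel
  have hfinal : mfrob (U1 * S1 * V1ᵀ - A b) ≤ e0 + Cg * h := by
    rw [hkey]
    refine (mfrob_add_le _ _).trans ?_
    have : mfrob ((U1 * (Lf b)ᵀ + U1 * S b * V0ᵀ + K b * V0ᵀ - A b)
        - (U1 * (Lf a)ᵀ + U1 * S a * V0ᵀ + K a * V0ᵀ - A a)) ≤ Cg * h := by
      rw [hhdef]; exact hG
    linarith
  have hCgval : Cg * h = h * (ε + L' * ((7 + 3 * L' * h) * e0 + (12 * B' + 6 * L' * B' * h) * h)) := by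
    rw [hCgdef, hm4def, hm3def, hm5def, hdKdef, hm1def]
    ring
  rw [hCgval] at hfinal
  linarith

end MatrixPS

namespace MatrixPS

lemma mfrob_zero {n m : ℕ} : mfrob (0 : Matrix (Fin n) (Fin m) ℝ) = 0 := by
  rw [mfrob_eq_norm]
  have : toE (0 : Matrix (Fin n) (Fin m) ℝ) = 0 := rfl
  rw [this, norm_zero]

set_option maxHeartbeats 1000000 in
theorem matrix_projector_splitting_robustness'
    (L B Δ : ℝ) :
    ∃ c1 c2 : ℝ, ∀ (t0 T : ℝ), T - t0 = Δ →
    ∀ (n1 n2 r : ℕ)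
      (F : ℝ → Matrix (Fin n1) (Fin n2) ℝ → Matrix (Fin n1) (Fin n2) ℝ)
      (A : ℝ → Matrix (Fin n1) (Fin n2) ℝ),
    (∀ (Y : Matrix (Fin n1) (Fin n2) ℝ) a b, ContinuousOn (fun t => F t Y a b) (Icc t0 T)) →
    (∀ t ∈ Icc t0 T, ∀ Y Y', mfrob (F t Y - F t Y') ≤ L * mfrob (Y - Y')) →
    (∀ t ∈ Icc t0 T, ∀ Y, mfrob (F t Y) ≤ B) →
    (∀ t ∈ Icc t0 T, ∀ a b, HasDerivWithinAt (fun s => A s a b) (F t (A t) a b) (Icc t0 T) t) →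
    (A t0).rank = r →
    ∀ ε : ℝ, 0 ≤ ε →
    (∀ t ∈ Icc t0 T, ∀ (U : Matrix (Fin n1) (Fin r) ℝ) (S : Matrix (Fin r) (Fin r) ℝ)
       (V : Matrix (Fin n2) (Fin r) ℝ), Uᵀ * U = 1 → Vᵀ * V = 1 → IsUnit S →
       mfrob ((1 - U * Uᵀ) * F t (U * S * Vᵀ) * (1 - V * Vᵀ)) ≤ ε) →
    ∀ h : ℝ, 0 < h →
    ∀ (Us : ℕ → Matrix (Fin n1) (Fin r) ℝ) (Ss : ℕ → Matrix (Fin r) (Fin r) ℝ)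
      (Vs : ℕ → Matrix (Fin n2) (Fin r) ℝ),
    A t0 = Us 0 * Ss 0 * (Vs 0)ᵀ → (Us 0)ᵀ * Us 0 = 1 → (Vs 0)ᵀ * Vs 0 = 1 →
    (∀ k : ℕ, t0 + (k + 1 : ℕ) * h ≤ T →
      MatStep F (t0 + k * h) (t0 + (k + 1 : ℕ) * h)
        (Us k) (Ss k) (Vs k) (Us (k + 1)) (Ss (k + 1)) (Vs (k + 1))) →
    ∀ N : ℕ, t0 + N * h ≤ T →
      mfrob (Us N * Ss N * (Vs N)ᵀ - A (t0 + N * h)) ≤ c1 * h + c2 * ε := by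
  set L' := max L 0 with hL'def
  set B' := max B 0 with hB'def
  set D := max Δ 0 with hDdef
  have hL' : 0 ≤ L' := le_max_right _ _
  have hB' : 0 ≤ B' := le_max_right _ _
  have hD : 0 ≤ D := le_max_right _ _
  set γ := L' * (7 + 3 * L' * D) with hγdef
  set β := L' * (12 * B' + 6 * L' * B' * D) with hβdef
  have hγ : 0 ≤ γ := by
    have : 0 ≤ 7 + 3 * L' * D := by positivity
    exact mul_nonneg hL' this
  have hβ : 0 ≤ β := by
    have : 0 ≤ 12 * B' + 6 * L' * B' * D := by positivity
    exact mul_nonneg hL' this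
  refine ⟨β * D * Real.exp (γ * D), D * Real.exp (γ * D), ?_⟩
  intro t0 T hΔ n1 n2 r F A _hcont hLip hBd hA _hrank ε hε0 hεb h hh Us Ss Vs hinit _hU0 hV0 hsteps
  have hLip' : ∀ t ∈ Icc t0 T, ∀ Y Y', mfrob (F t Y - F t Y') ≤ L' * mfrob (Y - Y') :=
    fun t ht Y Y' => (hLip t ht Y Y').trans
      (mul_le_mul_of_nonneg_right (le_max_left L 0) (mfrob_nonneg _))
  have hBd' : ∀ t ∈ Icc t0 T, ∀ Y, mfrob (F t Y) ≤ B' :=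
    fun t ht Y => (hBd t ht Y).trans (le_max_left B 0)
  have hεb' := eps_ext hL' hLip' hεb
  -- main induction
  have key : ∀ n : ℕ, t0 + n * h ≤ T → ((Vs n)ᵀ * Vs n = 1 ∧
      mfrob (Us n * Ss n * (Vs n)ᵀ - A (t0 + n * h))
        ≤ (ε + β * h) * (n * h) * (1 + γ * h) ^ n) := by
    intro n
    induction n with
    | zero =>
      intro _
      refine ⟨hV0, ?_⟩
      simp only [Nat.cast_zero, zero_mul, add_zero, pow_zero, mul_one, mul_zero]
      rw [← hinit, sub_self, mfrob_zero]
    | succ n ih =>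
      intro hT1
      have hstep_le : (n : ℝ) * h ≤ ((n + 1 : ℕ) : ℝ) * h := by
        push_cast
        nlinarith [hh.le]
      have hTn : t0 + n * h ≤ T := by linarith
      obtain ⟨hVorth, hbound⟩ := ih hTn
      have hstep := hsteps n hT1
      have ha : t0 ≤ t0 + n * h := by
        have : 0 ≤ (n : ℝ) * h := mul_nonneg (Nat.cast_nonneg n) hh.le
        linarith
      have hab : t0 + n * h ≤ t0 + ((n + 1 : ℕ) : ℝ) * h := by linarith
      have hone := one_step hL' hB' hLip' hBd' hA hεb' hab ha hT1 hVorth hstep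
      have hba : t0 + ((n + 1 : ℕ) : ℝ) * h - (t0 + n * h) = h := by push_cast; ring
      rw [hba] at hone
      have hhD : h ≤ D := by
        have h1 : t0 + h ≤ t0 + ((n + 1 : ℕ) : ℝ) * h := by
          push_cast
          nlinarith [mul_nonneg (Nat.cast_nonneg (α := ℝ) n) hh.le]
        have : h ≤ T - t0 := by linarith
        rw [hΔ] at this
        exact this.trans (le_max_left _ _)
      obtain ⟨_, _, _, _, _, _, _, _, _, _, _, _, _, hV1orth⟩ := hstep
      refine ⟨hV1orth, ?_⟩
      set en := mfrob (Us n * Ss n * (Vs n)ᵀ - A (t0 + n * h)) with hen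
      have hen0 : 0 ≤ en := mfrob_nonneg _
      -- step 1: clean recursion
      have hstep1 : mfrob (Us (n+1) * Ss (n+1) * (Vs (n+1))ᵀ - A (t0 + ((n + 1 : ℕ) : ℝ) * h))
          ≤ (1 + γ * h) * en + h * (ε + β * h) := by
        have hc1 : L' * (7 + 3 * L' * h) ≤ γ := by
          rw [hγdef]
          nlinarith [mul_nonneg (mul_nonneg hL' hL') (sub_nonneg.2 hhD)]
        have hc2 : L' * (12 * B' + 6 * L' * B' * h) ≤ β := by
          rw [hβdef]
          nlinarith [mul_nonneg (mul_nonneg (mul_nonneg hL' hL') hB') (sub_nonneg.2 hhD)]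
        have e1 : h * (ε + L' * ((7 + 3 * L' * h) * en + (12 * B' + 6 * L' * B' * h) * h))
            ≤ h * (ε + γ * en + β * h) := by
          have t1 : L' * ((7 + 3 * L' * h) * en) ≤ γ * en := by
            have := mul_le_mul_of_nonneg_right hc1 hen0
            nlinarith
          have t2 : L' * ((12 * B' + 6 * L' * B' * h) * h) ≤ β * h := by
            have := mul_le_mul_of_nonneg_right hc2 hh.le
            nlinarith
          have : ε + L' * ((7 + 3 * L' * h) * en + (12 * B' + 6 * L' * B' * h) * h)
              ≤ ε + γ * en + β * h := by nlinarith
          exact mul_le_mul_of_nonneg_left this hh.le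
        calc mfrob (Us (n+1) * Ss (n+1) * (Vs (n+1))ᵀ - A (t0 + ((n + 1 : ℕ) : ℝ) * h))
            ≤ en + h * (ε + L' * ((7 + 3 * L' * h) * en + (12 * B' + 6 * L' * B' * h) * h)) :=
              hone
        _ ≤ en + h * (ε + γ * en + β * h) := by linarith
        _ = (1 + γ * h) * en + h * (ε + β * h) := by ring
      -- step 2: unfold the recursion
      have hgh : 0 ≤ γ * h := mul_nonneg hγ hh.le
      have hpow1 : (1:ℝ) ≤ (1 + γ * h) ^ (n + 1) := one_le_pow₀ (by linarith)
      have hpown : (0:ℝ) ≤ (1 + γ * h) ^ n := le_of_lt (pow_pos (by linarith) n)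
      have hA0 : 0 ≤ ε + β * h := by positivity
      have hQ : (1 + γ * h) ^ (n + 1) = (1 + γ * h) ^ n * (1 + γ * h) := pow_succ _ _
      have hstep2 : (1 + γ * h) * en + h * (ε + β * h)
          ≤ (ε + β * h) * (((n:ℝ) + 1) * h) * (1 + γ * h) ^ (n + 1) := by
        have h2 : (1 + γ * h) * en ≤ (1 + γ * h) * ((ε + β * h) * ((n:ℝ) * h) * (1 + γ * h) ^ n) :=
          mul_le_mul_of_nonneg_left hbound (by linarith)
        have hNn : 0 ≤ (n:ℝ) * h := mul_nonneg (Nat.cast_nonneg n) hh.le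
        nlinarith [mul_nonneg hA0 hh.le, mul_nonneg (mul_nonneg hA0 hNn) hpown,
          mul_nonneg (mul_nonneg (mul_nonneg hA0 hNn) hpown) hgh,
          mul_nonneg (mul_nonneg hA0 hh.le) (sub_nonneg.2 hpow1)]
      push_cast at hstep1 hstep2 ⊢
      exact hstep1.trans hstep2
  intro N hN
  obtain ⟨_, hb⟩ := key N hN
  refine hb.trans ?_
  have hNh : (N : ℝ) * h ≤ D := by
    have h0 : (N : ℝ) * h ≤ T - t0 := by linarith
    rw [hΔ] at h0
    exact h0.trans (le_max_left _ _)
  have hNh0 : 0 ≤ (N : ℝ) * h := mul_nonneg (Nat.cast_nonneg N) hh.le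
  have hgh : 0 ≤ γ * h := mul_nonneg hγ hh.le
  have hA0 : 0 ≤ ε + β * h := by positivity
  have hpow : (1 + γ * h) ^ N ≤ Real.exp (γ * D) := by
    have h1 : 1 + γ * h ≤ Real.exp (γ * h) := by
      have := Real.add_one_le_exp (γ * h)
      linarith
    have h2 : (1 + γ * h) ^ N ≤ Real.exp (γ * h) ^ N :=
      pow_le_pow_left₀ (by linarith) h1 N
    refine h2.trans ?_
    rw [← Real.exp_nat_mul]
    refine Real.exp_le_exp.2 ?_
    have : (N : ℝ) * (γ * h) = γ * ((N : ℝ) * h) := by ring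
    rw [this]
    exact mul_le_mul_of_nonneg_left hNh hγ
  have hexp : 0 ≤ Real.exp (γ * D) := (Real.exp_pos _).le
  have hfin : (ε + β * h) * ((N : ℝ) * h) * (1 + γ * h) ^ N
      ≤ (ε + β * h) * D * Real.exp (γ * D) := by
    have s1 : (ε + β * h) * ((N : ℝ) * h) * (1 + γ * h) ^ N
        ≤ (ε + β * h) * ((N : ℝ) * h) * Real.exp (γ * D) :=
      mul_le_mul_of_nonneg_left hpow (mul_nonneg hA0 hNh0)
    have s2 : (ε + β * h) * ((N : ℝ) * h) ≤ (ε + β * h) * D :=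
      mul_le_mul_of_nonneg_left hNh hA0
    exact s1.trans (mul_le_mul_of_nonneg_right s2 hexp)
  refine hfin.trans ?_
  have : (ε + β * h) * D * Real.exp (γ * D)
      = β * D * Real.exp (γ * D) * h + D * Real.exp (γ * D) * ε := by ring
  linarith


/-- **Robustness of the matrix projector-splitting integrator to small singular values**
(Kieri–Lubich–Walach, Theorem 2.1).  If `F` is `L`-Lipschitz and bounded by `B` in the
Frobenius norm, the non-tangential part of `F` at every rank-`r` matrix `Y = U S Vᵀ` is
bounded by `ε`, and the initial value `A(t0)` has rank `r`, then the iterates `Yₙ` of the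
projector-splitting integrator with step size `h` (all substeps solved exactly) satisfy
`‖Yₙ - A(tₙ)‖ ≤ c₁ h + c₂ ε` with constants depending only on `L`, `B` and `T - t0`. -/
theorem matrix_projector_splitting_robustness
    (L B Δ : ℝ) :
    ∃ c1 c2 : ℝ, ∀ (t0 T : ℝ), T - t0 = Δ →
    ∀ (n1 n2 r : ℕ)
      (F : ℝ → Matrix (Fin n1) (Fin n2) ℝ → Matrix (Fin n1) (Fin n2) ℝ)
      (A : ℝ → Matrix (Fin n1) (Fin n2) ℝ),
    -- (joint) continuity of `F` in time and Lipschitz continuity and boundedness in `Y`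
    (∀ (Y : Matrix (Fin n1) (Fin n2) ℝ) a b, ContinuousOn (fun t => F t Y a b) (Icc t0 T)) →
    (∀ t ∈ Icc t0 T, ∀ Y Y', mfrob (F t Y - F t Y') ≤ L * mfrob (Y - Y')) →
    (∀ t ∈ Icc t0 T, ∀ Y, mfrob (F t Y) ≤ B) →
    -- `A` solves `Ȧ(t) = F(t, A(t))` on `[t0, T]`
    (∀ t ∈ Icc t0 T, ∀ a b, HasDerivWithinAt (fun s => A s a b) (F t (A t) a b) (Icc t0 T) t) →
    -- the initial value has rank `r`
    (A t0).rank = r →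
    ∀ ε : ℝ, 0 ≤ ε →
    -- the non-tangential part of `F` at rank-`r` matrices is bounded by `ε`
    (∀ t ∈ Icc t0 T, ∀ (U : Matrix (Fin n1) (Fin r) ℝ) (S : Matrix (Fin r) (Fin r) ℝ)
       (V : Matrix (Fin n2) (Fin r) ℝ), Uᵀ * U = 1 → Vᵀ * V = 1 → IsUnit S →
       mfrob ((1 - U * Uᵀ) * F t (U * S * Vᵀ) * (1 - V * Vᵀ)) ≤ ε) →
    ∀ h : ℝ, 0 < h →
    ∀ (Us : ℕ → Matrix (Fin n1) (Fin r) ℝ) (Ss : ℕ → Matrix (Fin r) (Fin r) ℝ)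
      (Vs : ℕ → Matrix (Fin n2) (Fin r) ℝ),
    -- start from `Y₀ = A(t0)` given in factored form
    A t0 = Us 0 * Ss 0 * (Vs 0)ᵀ → (Us 0)ᵀ * Us 0 = 1 → (Vs 0)ᵀ * Vs 0 = 1 →
    -- the iterates are produced by the projector-splitting integrator
    (∀ k : ℕ, t0 + (k + 1 : ℕ) * h ≤ T →
      MatStep F (t0 + k * h) (t0 + (k + 1 : ℕ) * h)
        (Us k) (Ss k) (Vs k) (Us (k + 1)) (Ss (k + 1)) (Vs (k + 1))) →
    ∀ N : ℕ, t0 + N * h ≤ T →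
      mfrob (Us N * Ss N * (Vs N)ᵀ - A (t0 + N * h)) ≤ c1 * h + c2 * ε :=
  matrix_projector_splitting_robustness' L B Δ

end MatrixPS
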